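/- Let (X, d_X) and (Y, d_Y) be finite metric spaces, let f : X → Y be an injective nonexpansive map, let δ ≥ 0, and let k ≥ 1 be an integer. Then every maximal k-edge-connected subset of X (with respect to the δ-threshold graph of X) is contained in f⁻¹(B) for some maximal k-edge-connected subset B of Y (with respect to the δ-threshold graph of Y); that is, EL^k_δ(X) refines f⁻¹(EL^k_δ(Y)), so EL^k_δ is functorial for injective nonexpansive maps. -/

import Mathlib

/-- A nonexpansive map between metric spaces. -/
def Nonexpansive {X Y : Type*} [MetricSpace X] [MetricSpace Y] (f : X → Y) : Prop :=
  ∀ x x' : X, dist (f x) (f x') ≤ dist x x'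

/-- The `δ`-threshold graph of a metric space: distinct points are adjacent
iff their distance is at most `δ`. -/
def thresholdGraph (X : Type*) [MetricSpace X] (δ : ℝ) : SimpleGraph X where
  Adj x y := x ≠ y ∧ dist x y ≤ δ
  symm := ⟨fun x y h => ⟨h.1.symm, by rw [dist_comm]; exact h.2⟩⟩
  loopless := ⟨fun x h => h.1 rfl⟩

/-- `A` is `k`-edge-connected w.r.t. `G`: the induced subgraph `G[A]` is connected,
and remains connected after deleting any set of fewer than `k` of its edges. -/
def IsKEdgeConnected {X : Type*} (G : SimpleGraph X) (k : ℕ) (A : Set X) : Prop :=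
  (G.induce A).Connected ∧
    ∀ F : Set (Sym2 A), F ⊆ (G.induce A).edgeSet → F.ncard < k →
      ((G.induce A).deleteEdges F).Connected

/-- A maximal `k`-edge-connected subset. -/
def IsMaxKEdgeConnected {X : Type*} (G : SimpleGraph X) (k : ℕ) (A : Set X) : Prop :=
  IsKEdgeConnected G k A ∧
    ∀ B : Set X, IsKEdgeConnected G k B → A ⊆ B → A = B

section Aux

variable {X Y : Type*} [MetricSpace X] [MetricSpace Y] [Finite Y]

/-- The image of a `k`-edge-connected set under an injective nonexpansive map
is `k`-edge-connected. -/
lemma image_isKEdgeConnected (f : X → Y) (hinj : Function.Injective f)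
    (hf : Nonexpansive f) (δ : ℝ) (k : ℕ) (A : Set X)
    (hA : IsKEdgeConnected (thresholdGraph X δ) k A) :
    IsKEdgeConnected (thresholdGraph Y δ) k (f '' A) := by
  set G := thresholdGraph X δ
  set H := thresholdGraph Y δ
  -- vertex map
  let v : A → (f '' A : Set Y) := fun a => ⟨f a, ⟨a, a.2, rfl⟩⟩
  have hvsurj : Function.Surjective v := by
    rintro ⟨y, x, hx, rfl⟩
    exact ⟨⟨x, hx⟩, rfl⟩
  have hvinj : Function.Injective v := by
    intro a b hab
    exact Subtype.ext (hinj (congrArg Subtype.val hab))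
  have hadj : ∀ a b : A, (G.induce A).Adj a b → (H.induce (f '' A)).Adj (v a) (v b) := by
    intro a b hab
    obtain ⟨hne, hd⟩ : (a : X) ≠ b ∧ dist (a : X) b ≤ δ := hab
    refine ⟨fun h => hne (hinj h), le_trans (hf _ _) hd⟩
  constructor
  · -- connectivity
    exact hA.1.map ⟨v, fun {a b} hab => hadj a b hab⟩ hvsurj
  · intro F hF hFcard
    -- pull back the deleted edges
    set F' : Set (Sym2 A) :=
      {e | e ∈ (G.induce A).edgeSet ∧ Sym2.map v e ∈ F} with hF'def
    have hF'sub : F' ⊆ (G.induce A).edgeSet := fun e he => he.1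
    have hF'card : F'.ncard ≤ F.ncard := by
      have himg : Sym2.map v '' F' ⊆ F := by
        rintro _ ⟨e, he, rfl⟩; exact he.2
      have : F'.ncard = (Sym2.map v '' F').ncard :=
        (Set.ncard_image_of_injective F' (Sym2.map.injective hvinj)).symm
      rw [this]
      exact Set.ncard_le_ncard himg F.toFinite
    have hconn := hA.2 F' hF'sub (lt_of_le_of_lt hF'card hFcard)
    have hadj' : ∀ a b : A, ((G.induce A).deleteEdges F').Adj a b →
        ((H.induce (f '' A)).deleteEdges F).Adj (v a) (v b) := by
      intro a b hab
      rw [SimpleGraph.deleteEdges_adj] at hab ⊢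
      obtain ⟨hab, hnF'⟩ := hab
      refine ⟨hadj a b hab, ?_⟩
      intro hmem
      exact hnF' ⟨((G.induce A).mem_edgeSet).mpr hab, hmem⟩
    exact hconn.map ⟨v, fun {a b} hab => hadj' a b hab⟩ hvsurj

end Aux

/-- `EL^k_δ` is functorial for injective nonexpansive maps: every maximal
`k`-edge-connected subset of `X` (w.r.t. the `δ`-threshold graph) is contained in
`f⁻¹(B)` for some maximal `k`-edge-connected subset `B` of `Y`. -/
theorem EL_functorial_inj {X Y : Type*}
    [MetricSpace X] [Fintype X] [Nonempty X]
    [MetricSpace Y] [Fintype Y] [Nonempty Y]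
    (f : X → Y) (hinj : Function.Injective f) (hf : Nonexpansive f)
    (δ : ℝ) (hδ : 0 ≤ δ) (k : ℕ) (hk : 1 ≤ k) :
    ∀ A : Set X, IsMaxKEdgeConnected (thresholdGraph X δ) k A →
      ∃ B : Set Y, IsMaxKEdgeConnected (thresholdGraph Y δ) k B ∧ A ⊆ f ⁻¹' B := by
  intro A hA
  set H := thresholdGraph Y δ
  have hfa : IsKEdgeConnected H k (f '' A) :=
    image_isKEdgeConnected f hinj hf δ k A hA.1
  -- the family of k-edge-connected sets containing f '' A
  set S : Set (Set Y) := {B | IsKEdgeConnected H k B ∧ f '' A ⊆ B} with hSdef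
  have hSne : (f '' A) ∈ S := ⟨hfa, subset_rfl⟩
  obtain ⟨B, hBS, hBmax⟩ := Set.Finite.exists_maximalFor Set.ncard S S.toFinite ⟨_, hSne⟩
  refine ⟨B, ⟨hBS.1, ?_⟩, ?_⟩
  · intro B' hB' hsub
    have hB'S : B' ∈ S := ⟨hB', hBS.2.trans hsub⟩
    have hle : B.ncard ≤ B'.ncard := Set.ncard_le_ncard hsub B'.toFinite
    have := hBmax (j := B') hB'S hle
    exact Set.eq_of_subset_of_ncard_le hsub this.ge B'.toFinite
  · intro x hx
    exact hBS.2 ⟨x, hx, rfl⟩
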